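/- For every d ∈ ℝ^n there exists δ > 0 such that for all d′ ∈ ℝ^n with ‖d′ − d‖ < δ: (i) K(d′) ⊆ K(d) and hence H(d′) ⊆ H(d); and (ii) Π_C(d′) − Π_C(d) − H(d′ − d) = 0 for every H ∈ H(d′). -/

import Mathlib

open Matrix

/-- The matrix `B` with `(Bx)_i = x_i − x_{i+1}` for `1 ≤ i ≤ n−1` and `(Bx)_n = x_n`. -/
def Bmat (n : ℕ) : Matrix (Fin n) (Fin n) ℝ :=
  Matrix.of fun i j => if j = i then 1 else if (j : ℕ) = (i : ℕ) + 1 then -1 else 0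

/-- `B_Γ`, the submatrix of `B` formed by the rows indexed by `Γ`. -/
def subRows {n : ℕ} (Γ : Finset (Fin n)) : Matrix {i // i ∈ Γ} (Fin n) ℝ :=
  Matrix.of fun i j => Bmat n i.1 j

/-- `H = I_n − B_Γᵀ (B_Γ B_Γᵀ)⁻¹ B_Γ`, the orthogonal projection onto the null space of
`B_Γ` (equal to `I_n` when `Γ = ∅`). -/
noncomputable def Hmat {n : ℕ} (Γ : Finset (Fin n)) : Matrix (Fin n) (Fin n) ℝ :=
  1 - (subRows Γ)ᵀ * (subRows Γ * (subRows Γ)ᵀ)⁻¹ * subRows Γ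

/-- The monotone nonnegative cone `C = {x : x₁ ≥ x₂ ≥ … ≥ xₙ ≥ 0}`. -/
def coneC (n : ℕ) : Set (Fin n → ℝ) :=
  {x | (∀ i j : Fin n, i ≤ j → x j ≤ x i) ∧ ∀ i, 0 ≤ x i}

/-- `Pc` is the Euclidean (metric) projection onto the cone `C`:
`Pc d` minimizes `½‖x − d‖²` over `x ∈ C`. -/
def IsProjC {n : ℕ} (Pc : (Fin n → ℝ) → Fin n → ℝ) : Prop :=
  ∀ d : Fin n → ℝ, Pc d ∈ coneC n ∧
    ∀ x ∈ coneC n, (1/2) * ∑ i, (Pc d i - d i)^2 ≤ (1/2) * ∑ i, (x i - d i)^2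

/-- `z(d) = (Bᵀ)⁻¹(d − Π_C(d))`. -/
noncomputable def zdual {n : ℕ} (Pc : (Fin n → ℝ) → Fin n → ℝ) (d : Fin n → ℝ) :
    Fin n → ℝ :=
  Matrix.mulVec ((Bmat n)ᵀ)⁻¹ (d - Pc d)

/-- `K(d) = {Γ : Supp(z(d)) ⊆ Γ ⊆ I(Π_C(d))}`. -/
def Kset {n : ℕ} (Pc : (Fin n → ℝ) → Fin n → ℝ) (d : Fin n → ℝ) :
    Set (Finset (Fin n)) :=
  {Γ | (∀ i, zdual Pc d i ≠ 0 → i ∈ Γ) ∧ ∀ i ∈ Γ, (Bmat n).mulVec (Pc d) i = 0}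

/-- `H(d) = {I_n − B_Γᵀ(B_Γ B_Γᵀ)⁻¹ B_Γ : Γ ∈ K(d)}`, the HS-Jacobian of `Π_C` at `d`. -/
def Hset {n : ℕ} (Pc : (Fin n → ℝ) → Fin n → ℝ) (d : Fin n → ℝ) :
    Set (Matrix (Fin n) (Fin n) ℝ) :=
  {H | ∃ Γ ∈ Kset Pc d, H = Hmat Γ}

/-- `M(y) = {λᵀHλ : H ∈ H(yλ + b)}`. -/
def Mset {n : ℕ} (Pc : (Fin n → ℝ) → Fin n → ℝ) (lam b : Fin n → ℝ) (y : ℝ) : Set ℝ :=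
  {m | ∃ H ∈ Hset Pc (y • lam + b), m = dotProduct lam (H.mulVec lam)}

/-- The dual objective `φ(y) = ½‖Π_C(yλ + b)‖² − yτ − ½‖b‖²`. -/
noncomputable def phiFun {n : ℕ} (Pc : (Fin n → ℝ) → Fin n → ℝ) (lam b : Fin n → ℝ)
    (τ : ℝ) : ℝ → ℝ :=
  fun y => (1/2) * ∑ i, (Pc (y • lam + b) i)^2 - y * τ - (1/2) * ∑ i, (b i)^2

/-- `ψ(y) = ⟨Π_C(yλ + b), λ⟩ − τ` (the derivative `φ′` of the dual objective). -/
noncomputable def psiFun {n : ℕ} (Pc : (Fin n → ℝ) → Fin n → ℝ) (lam b : Fin n → ℝ)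
    (τ : ℝ) : ℝ → ℝ :=
  fun y => (∑ i, Pc (y • lam + b) i * lam i) - τ

/-- The Euclidean norm on `ℝⁿ`. -/
noncomputable def euclNorm {n : ℕ} (x : Fin n → ℝ) : ℝ :=
  Real.sqrt (∑ i, (x i)^2)

section Aux

open Finset

lemma enorm_nonneg' {n : ℕ} (x : Fin n → ℝ) : 0 ≤ euclNorm x := Real.sqrt_nonneg _

lemma abs_le_enorm {n : ℕ} (x : Fin n → ℝ) (j : Fin n) : |x j| ≤ euclNorm x := by
  rw [← Real.sqrt_sq_eq_abs]
  exact Real.sqrt_le_sqrt (Finset.single_le_sum (f := fun i => (x i)^2)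
    (fun i _ => sq_nonneg _) (Finset.mem_univ j))

lemma coneC_segment {n : ℕ} {x y : Fin n → ℝ} (hx : x ∈ coneC n) (hy : y ∈ coneC n)
    {t : ℝ} (h0 : 0 ≤ t) (h1 : t ≤ 1) :
    (fun i => x i + t * (y i - x i)) ∈ coneC n := by
  constructor
  · intro i j hij
    have h2 := hx.1 i j hij
    have h3 := hy.1 i j hij
    simp only
    nlinarith
  · intro i
    have h2 := hx.2 i
    have h3 := hy.2 i
    simp only
    nlinarith

/-- Variational inequality for the projection. -/
lemma proj_vi {n : ℕ} {Pc : (Fin n → ℝ) → Fin n → ℝ} (hPc : IsProjC Pc)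
    (d : Fin n → ℝ) {x : Fin n → ℝ} (hx : x ∈ coneC n) :
    ∑ i, (d i - Pc d i) * (x i - Pc d i) ≤ 0 := by
  by_contra hS
  push_neg at hS
  set S := ∑ i, (d i - Pc d i) * (x i - Pc d i) with hSdef
  set T := ∑ i, (x i - Pc d i)^2 with hTdef
  have hT0 : 0 ≤ T := Finset.sum_nonneg fun i _ => sq_nonneg _
  have key : ∀ t : ℝ, 0 ≤ t → t ≤ 1 → 0 ≤ -(2*t)*S + t^2*T := by
    intro t ht0 ht1
    have hmem := coneC_segment (hPc d).1 hx ht0 ht1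
    have hmin := (hPc d).2 _ hmem
    have expand : ∑ i, ((fun i => Pc d i + t * (x i - Pc d i)) i - d i)^2
        = (∑ i, (Pc d i - d i)^2) + (-(2*t)*S + t^2*T) := by
      rw [hSdef, hTdef, Finset.mul_sum, Finset.mul_sum, ← Finset.sum_add_distrib,
        ← Finset.sum_add_distrib]
      exact Finset.sum_congr rfl fun i _ => by ring
    rw [expand] at hmin
    linarith
  rcases eq_or_lt_of_le hT0 with hT | hT
  · -- T = 0 : each term of S is zero
    have hz : ∀ i ∈ Finset.univ, (x i - Pc d i)^2 = 0 := by
      rw [← Finset.sum_eq_zero_iff_of_nonneg (fun i _ => sq_nonneg _)]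
      exact hT.symm
    have : S = 0 := Finset.sum_eq_zero fun i hi => by
      have := hz i hi
      have hxi : x i - Pc d i = 0 := by
        have := sq_eq_zero_iff.mp this
        exact this
      rw [hxi, mul_zero]
    linarith
  · set t := min 1 (S/T) with htdef
    have ht0 : 0 < t := lt_min one_pos (div_pos hS hT)
    have ht1 : t ≤ 1 := min_le_left _ _
    have htS : t ≤ S / T := min_le_right _ _
    have hkey := key t ht0.le ht1
    have h2 : t^2 * T ≤ t * S := by
      have : t * T ≤ S := by
        rw [div_eq_mul_inv] at htS
        calc t * T ≤ (S * T⁻¹) * T := by nlinarith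
          _ = S := by field_simp
      nlinarith
    nlinarith

/-- 1-Lipschitz (squared) property of the projection. -/
lemma proj_lipschitz {n : ℕ} {Pc : (Fin n → ℝ) → Fin n → ℝ} (hPc : IsProjC Pc)
    (d d' : Fin n → ℝ) :
    ∑ i, (Pc d' i - Pc d i)^2 ≤ ∑ i, (d' i - d i)^2 := by
  have h1 := proj_vi hPc d (hPc d').1
  have h2 := proj_vi hPc d' (hPc d).1
  set Q := ∑ i, (Pc d' i - Pc d i)^2 with hQdef
  set P := ∑ i, (d' i - d i)^2 with hPdef
  set S := ∑ i, (d' i - d i) * (Pc d' i - Pc d i) with hSdef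
  have hQ0 : 0 ≤ Q := Finset.sum_nonneg fun i _ => sq_nonneg _
  have hP0 : 0 ≤ P := Finset.sum_nonneg fun i _ => sq_nonneg _
  have hQS : Q ≤ S := by
    have hsum : Q - S = (∑ i, (d i - Pc d i) * (Pc d' i - Pc d i))
        + ∑ i, (d' i - Pc d' i) * (Pc d i - Pc d' i) := by
      rw [hQdef, hSdef, ← Finset.sum_sub_distrib, ← Finset.sum_add_distrib]
      exact Finset.sum_congr rfl fun i _ => by ring
    linarith
  have hCS : S^2 ≤ P * Q := by
    have := Finset.sum_mul_sq_le_sq_mul_sq Finset.univ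
      (fun i => d' i - d i) (fun i => Pc d' i - Pc d i)
    simpa [hSdef, hPdef, hQdef] using this
  nlinarith

lemma proj_comp_lipschitz {n : ℕ} {Pc : (Fin n → ℝ) → Fin n → ℝ} (hPc : IsProjC Pc)
    (d d' : Fin n → ℝ) (i : Fin n) :
    |Pc d' i - Pc d i| ≤ euclNorm (d' - d) := by
  have h := proj_lipschitz hPc d d'
  have h2 : (Pc d' i - Pc d i)^2 ≤ ∑ j, (d' j - d j)^2 :=
    le_trans (Finset.single_le_sum (f := fun j => (Pc d' j - Pc d j)^2)
      (fun j _ => sq_nonneg _) (Finset.mem_univ i)) h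
  rw [← Real.sqrt_sq_eq_abs]
  unfold euclNorm
  apply Real.sqrt_le_sqrt
  simpa using h2

lemma isUnit_det_Bmat (n : ℕ) : IsUnit (Bmat n).det := by
  have h : (Bmat n).BlockTriangular id :=  by
    intro i j hij
    have hij' : (j : ℕ) < (i : ℕ) := hij
    simp only [Bmat, Matrix.of_apply]
    rw [if_neg, if_neg]
    · omega
    · intro hji
      have : (j : ℕ) = (i : ℕ) := by exact_mod_cast congrArg Fin.val hji
      omega
  rw [Matrix.det_of_upperTriangular h]
  have : ∀ i : Fin n, Bmat n i i = 1 := by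
    intro i; simp [Bmat]
  simp [this]

lemma isUnit_det_Bmat_t (n : ℕ) : IsUnit (Bmat n)ᵀ.det := by
  rw [Matrix.det_transpose]; exact isUnit_det_Bmat n

lemma Bt_mulVec_zdual {n : ℕ} (Pc : (Fin n → ℝ) → Fin n → ℝ) (d : Fin n → ℝ) :
    (Bmat n)ᵀ.mulVec (zdual Pc d) = d - Pc d := by
  unfold zdual
  rw [Matrix.mulVec_mulVec, Matrix.mul_nonsing_inv _ (isUnit_det_Bmat_t n),
    Matrix.one_mulVec]

/-- If `z` is supported on `Γ` then `Bᵀ z = B_Γᵀ (z restricted to Γ)`. -/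
lemma Bt_mulVec_support {n : ℕ} (Γ : Finset (Fin n)) (z : Fin n → ℝ)
    (hz : ∀ i, z i ≠ 0 → i ∈ Γ) :
    (Bmat n)ᵀ.mulVec z = (subRows Γ)ᵀ.mulVec (fun i => z i.1) := by
  funext j
  show ∑ i, (Bmat n)ᵀ j i * z i = ∑ i : {i // i ∈ Γ}, (subRows Γ)ᵀ j i * z i.1
  have h1 : ∑ i : {i // i ∈ Γ}, (subRows Γ)ᵀ j i * z i.1
      = ∑ i ∈ Γ, (Bmat n)ᵀ j i * z i := by
    rw [← Finset.sum_coe_sort Γ (fun i => (Bmat n)ᵀ j i * z i)]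
    rfl
  rw [h1]
  symm
  apply Finset.sum_subset (Finset.subset_univ Γ)
  intro i _ hiΓ
  have : z i = 0 := by
    by_contra hne
    exact hiΓ (hz i hne)
  rw [this, mul_zero]

lemma isUnit_det_gram {n : ℕ} (Γ : Finset (Fin n)) :
    IsUnit ((subRows Γ) * (subRows Γ)ᵀ).det := by
  rw [isUnit_iff_ne_zero]
  intro h0
  obtain ⟨v, hvne, hMv⟩ := (Matrix.exists_mulVec_eq_zero_iff).mpr h0
  set A := subRows Γ with hA
  have hu : Aᵀ.mulVec v = 0 := by
    have h1 : dotProduct v ((A * Aᵀ).mulVec v) = 0 := by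
      rw [hMv, dotProduct_zero]
    rw [← Matrix.mulVec_mulVec, Matrix.dotProduct_mulVec, ← Matrix.mulVec_transpose] at h1
    exact dotProduct_self_eq_zero.mp h1
  -- extend v to Fin n
  set zt : Fin n → ℝ := fun i => if h : i ∈ Γ then v ⟨i, h⟩ else 0 with hzt
  have hsup : ∀ i, zt i ≠ 0 → i ∈ Γ := by
    intro i hi
    by_contra hiΓ
    apply hi
    simp [hzt, hiΓ]
  have hrestr : (fun i : {i // i ∈ Γ} => zt i.1) = v := by
    funext i
    simp [hzt, i.2]
  have hBz : (Bmat n)ᵀ.mulVec zt = 0 := by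
    rw [Bt_mulVec_support Γ zt hsup, hrestr]
    exact hu
  have hzt0 : zt = 0 := by
    have := congrArg (fun w => (((Bmat n)ᵀ)⁻¹).mulVec w) hBz
    simpa [Matrix.mulVec_mulVec, Matrix.nonsing_inv_mul _ (isUnit_det_Bmat_t n),
      Matrix.one_mulVec, Matrix.mulVec_zero] using this
  apply hvne
  funext i
  have : zt i.1 = 0 := by rw [hzt0]; rfl
  rw [← hrestr]
  exact this

/-- Key lemma: if `Γ ∈ K(d)` then `Hmat Γ * d = Pc d`. -/
lemma Hmat_mulVec_eq {n : ℕ} {Pc : (Fin n → ℝ) → Fin n → ℝ} {d : Fin n → ℝ}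
    {Γ : Finset (Fin n)} (hΓ1 : ∀ i, zdual Pc d i ≠ 0 → i ∈ Γ)
    (hΓ2 : ∀ i ∈ Γ, (Bmat n).mulVec (Pc d) i = 0) :
    (Hmat Γ).mulVec d = Pc d := by
  set A := subRows Γ with hA
  have hM := isUnit_det_gram Γ
  have hd : d = Pc d + (Bmat n)ᵀ.mulVec (zdual Pc d) := by
    rw [Bt_mulVec_zdual]; abel
  have hApd : A.mulVec (Pc d) = 0 := by
    funext i
    exact hΓ2 i.1 i.2
  have hterm1 : (Hmat Γ).mulVec (Pc d) = Pc d := by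
    unfold Hmat
    rw [Matrix.sub_mulVec, Matrix.one_mulVec, ← hA, Matrix.mul_assoc,
      ← Matrix.mulVec_mulVec, ← Matrix.mulVec_mulVec, hApd, Matrix.mulVec_zero,
      Matrix.mulVec_zero, sub_zero]
  have hterm2 : (Hmat Γ).mulVec ((Bmat n)ᵀ.mulVec (zdual Pc d)) = 0 := by
    rw [Bt_mulVec_support Γ _ hΓ1]
    rw [Matrix.mulVec_mulVec]
    have hzero : Hmat Γ * Aᵀ = 0 := by
      unfold Hmat
      rw [← hA, Matrix.sub_mul, Matrix.one_mul,
        Matrix.mul_assoc (Aᵀ * (A * Aᵀ)⁻¹) A Aᵀ,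
        Matrix.mul_assoc Aᵀ ((A * Aᵀ)⁻¹) (A * Aᵀ),
        Matrix.nonsing_inv_mul _ hM, Matrix.mul_one, sub_self]
    rw [hzero, Matrix.zero_mulVec]
  calc (Hmat Γ).mulVec d
      = (Hmat Γ).mulVec (Pc d) + (Hmat Γ).mulVec ((Bmat n)ᵀ.mulVec (zdual Pc d)) := by
        rw [← Matrix.mulVec_add, ← hd]
    _ = Pc d := by rw [hterm1, hterm2, add_zero]

lemma mulVec_comp_bound {n : ℕ} (A : Matrix (Fin n) (Fin n) ℝ) (u : Fin n → ℝ)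
    (r : ℝ) (hr0 : 0 ≤ r) (hr : ∀ j, |u j| ≤ r) (i : Fin n) :
    |A.mulVec u i| ≤ (∑ p, ∑ q, |A p q|) * r := by
  calc |A.mulVec u i| = |∑ q, A i q * u q| := by rw [Matrix.mulVec, dotProduct]
    _ ≤ ∑ q, |A i q * u q| := Finset.abs_sum_le_sum_abs _ _
    _ ≤ ∑ q, |A i q| * r := Finset.sum_le_sum fun q _ => by
        rw [abs_mul]; exact mul_le_mul_of_nonneg_left (hr q) (abs_nonneg _)
    _ = (∑ q, |A i q|) * r := (Finset.sum_mul _ _ _).symm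
    _ ≤ (∑ p, ∑ q, |A p q|) * r := by
        apply mul_le_mul_of_nonneg_right _ hr0
        exact Finset.single_le_sum (f := fun p => ∑ q, |A p q|)
          (fun p _ => Finset.sum_nonneg fun q _ => abs_nonneg _) (Finset.mem_univ i)

end Aux
/-- for every `d` there is `δ > 0` such that for all `d'` with
`‖d' − d‖ < δ`: (i) `K(d') ⊆ K(d)` and `H(d') ⊆ H(d)`; and (ii)
`Π_C(d') − Π_C(d) − H(d' − d) = 0` for every `H ∈ H(d')`. -/
theorem stmt9 {n : ℕ} (hn : 0 < n)
    (Pc : (Fin n → ℝ) → Fin n → ℝ) (hPc : IsProjC Pc) (d : Fin n → ℝ) :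
    ∃ δ > (0:ℝ), ∀ d' : Fin n → ℝ, euclNorm (d' - d) < δ →
      (Kset Pc d' ⊆ Kset Pc d ∧ Hset Pc d' ⊆ Hset Pc d) ∧
      ∀ H ∈ Hset Pc d', Pc d' - Pc d - H.mulVec (d' - d) = 0 := by
  classical
  haveI : Nonempty (Fin n) := ⟨⟨0, hn⟩⟩
  set c1 := ∑ p, ∑ q, |(((Bmat n)ᵀ)⁻¹) p q| with hc1
  set c2 := ∑ p, ∑ q, |Bmat n p q| with hc2
  have hc10 : 0 ≤ c1 :=
    Finset.sum_nonneg fun p _ => Finset.sum_nonneg fun q _ => abs_nonneg _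
  have hc20 : 0 ≤ c2 :=
    Finset.sum_nonneg fun p _ => Finset.sum_nonneg fun q _ => abs_nonneg _
  set g : Fin n → ℝ := fun i => min (if zdual Pc d i = 0 then 1 else |zdual Pc d i|)
      (if (Bmat n).mulVec (Pc d) i = 0 then 1 else |(Bmat n).mulVec (Pc d) i|) with hg
  have hgpos : ∀ i, 0 < g i := by
    intro i
    apply lt_min
    · split_ifs with h
      · exact one_pos
      · exact abs_pos.mpr h
    · split_ifs with h
      · exact one_pos
      · exact abs_pos.mpr h
  set ε := Finset.univ.inf' Finset.univ_nonempty g with hε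
  have hεpos : 0 < ε := by
    rw [hε, Finset.lt_inf'_iff]
    exact fun i _ => hgpos i
  have hεle : ∀ i, ε ≤ g i := fun i => Finset.inf'_le _ (Finset.mem_univ i)
  set den := 2*c1 + c2 + 1 with hden
  have hdenpos : 0 < den := by linarith
  refine ⟨ε / den, div_pos hεpos hdenpos, ?_⟩
  intro d' hd'
  set e := euclNorm (d' - d) with he
  have he0 : 0 ≤ e := enorm_nonneg' _
  have hkey : den * e < ε := (lt_div_iff₀' hdenpos).mp hd'
  have hcomp : ∀ j, |d' j - d j| ≤ e := by
    intro j
    have := abs_le_enorm (d' - d) j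
    simpa using this
  have hPcomp : ∀ j, |Pc d' j - Pc d j| ≤ e := fun j => proj_comp_lipschitz hPc d d' j
  have hzdiff : ∀ i, |zdual Pc d' i - zdual Pc d i| ≤ c1 * (2*e) := by
    intro i
    have heq : zdual Pc d' i - zdual Pc d i
        = (((Bmat n)ᵀ)⁻¹).mulVec ((d' - Pc d') - (d - Pc d)) i := by
      simp [zdual, Matrix.mulVec_sub]
    rw [heq]
    apply mulVec_comp_bound _ _ _ (by linarith)
    intro j
    have h1 : ((d' - Pc d') - (d - Pc d)) j = (d' j - d j) - (Pc d' j - Pc d j) := by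
      simp only [Pi.sub_apply]
      ring
    rw [h1]
    have h2 : |(d' j - d j) - (Pc d' j - Pc d j)| ≤ |d' j - d j| + |Pc d' j - Pc d j| :=
      abs_sub _ _
    have := hcomp j
    have := hPcomp j
    linarith
  have hBdiff : ∀ i, |(Bmat n).mulVec (Pc d') i - (Bmat n).mulVec (Pc d) i| ≤ c2 * e := by
    intro i
    have heq : (Bmat n).mulVec (Pc d') i - (Bmat n).mulVec (Pc d) i
        = (Bmat n).mulVec (fun j => Pc d' j - Pc d j) i := by
      have h0 : (fun j => Pc d' j - Pc d j) = Pc d' - Pc d := rfl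
      rw [h0, Matrix.mulVec_sub]
      simp [Pi.sub_apply]
    rw [heq]
    exact mulVec_comp_bound _ _ e he0 hPcomp i
  have key1 : ∀ i, zdual Pc d i ≠ 0 → zdual Pc d' i ≠ 0 := by
    intro i hi hcon
    have h1 : |zdual Pc d i| ≤ c1 * (2*e) := by
      have := hzdiff i
      rw [hcon] at this
      simpa using this
    have h2 : ε ≤ |zdual Pc d i| := by
      refine le_trans (hεle i) ?_
      calc g i ≤ (if zdual Pc d i = 0 then 1 else |zdual Pc d i|) := min_le_left _ _
        _ = |zdual Pc d i| := if_neg hi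
    nlinarith [mul_nonneg (by linarith : (0:ℝ) ≤ c2 + 1) he0]
  have key2 : ∀ i, (Bmat n).mulVec (Pc d) i ≠ 0 → (Bmat n).mulVec (Pc d') i ≠ 0 := by
    intro i hi hcon
    have h1 : |(Bmat n).mulVec (Pc d) i| ≤ c2 * e := by
      have := hBdiff i
      rw [hcon] at this
      simpa using this
    have h2 : ε ≤ |(Bmat n).mulVec (Pc d) i| := by
      refine le_trans (hεle i) ?_
      calc g i ≤ (if (Bmat n).mulVec (Pc d) i = 0 then 1
            else |(Bmat n).mulVec (Pc d) i|) := min_le_right _ _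
        _ = |(Bmat n).mulVec (Pc d) i| := if_neg hi
    nlinarith [mul_nonneg (by linarith : (0:ℝ) ≤ 2*c1 + 1) he0]
  have Kss : Kset Pc d' ⊆ Kset Pc d := by
    intro Γ hΓ
    obtain ⟨h1, h2⟩ := hΓ
    refine ⟨fun i hi => h1 i (key1 i hi), fun i hiΓ => ?_⟩
    by_contra hne
    exact key2 i hne (h2 i hiΓ)
  refine ⟨⟨Kss, ?_⟩, ?_⟩
  · rintro H ⟨Γ, hΓ, rfl⟩
    exact ⟨Γ, Kss hΓ, rfl⟩
  · rintro H ⟨Γ, hΓ', rfl⟩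
    have hΓ := Kss hΓ'
    have e1 : (Hmat Γ).mulVec d' = Pc d' := Hmat_mulVec_eq hΓ'.1 hΓ'.2
    have e2 : (Hmat Γ).mulVec d = Pc d := Hmat_mulVec_eq hΓ.1 hΓ.2
    rw [Matrix.mulVec_sub, e1, e2]
    exact sub_self _
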